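/- Let Λ be a finite, non-zero measure on [0,1] with μ := ∫_{[0,1]} log(1/(1−p)) p^{−2} Λ(dp) < ∞, let f(y) := ∫_{[0,1]} (1 − (1−p)^{e^y}) e^{−y} p^{−2} Λ(dp), choose κ ≥ 0 with f(y) ≤ μ/2 for all y ≥ κ, and set b_n := ∫_κ^{log n} dy/(μ − f(y)). Then for every integer k ≥ 1, as n → ∞, b_n = (log n)/μ + (1/μ²)∫_0^{log n} f(y) dy + (1/μ³)∫_0^{log n} f(y)² dy + … + (1/μ^{k+1})∫_0^{log n} f(y)^k dy + O(∫_0^{log n} f(y)^{k+1} dy) + O(1). -/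

import Mathlib

open MeasureTheory Filter Set Asymptotics

set_option maxHeartbeats 1000000

private lemma geom_aux (x m : ℝ) (hm : m ≠ 0) (hx : m - x ≠ 0) (k : ℕ) :
    1/(m - x) = (∑ j ∈ Finset.range (k+1), x^j / m^(j+1)) + x^(k+1)/(m^(k+1)*(m-x)) := by
  induction k with
  | zero =>
      field_simp
      simp only [zero_add, Finset.sum_range_one, pow_zero, pow_one]
      field_simp
      ring
  | succ k ih =>
      rw [Finset.sum_range_succ, ih]
      have h2 : x^(k+1)/(m^(k+1)*(m-x)) = x^(k+1)/m^(k+2) + x^(k+2)/(m^(k+2)*(m-x)) := by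
        field_simp
        ring
      rw [h2]; ring

private lemma aux_le_log {x E : ℝ} (hx0 : 0 < x) (hE : 0 < E) :
    1 - x ^ E ≤ E * Real.log (1/x) := by
  have h := Real.add_one_le_exp (Real.log x * E)
  rw [Real.rpow_def_of_pos hx0, one_div, Real.log_inv]
  nlinarith

private lemma aux_anti {x E₁ E₂ : ℝ} (hx0 : 0 ≤ x) (hx1 : x ≤ 1) (h1 : 0 < E₁) (h12 : E₁ ≤ E₂) :
    (1 - x ^ E₂) / E₂ ≤ (1 - x ^ E₁) / E₁ := by
  have h2 : 0 < E₂ := lt_of_lt_of_le h1 h12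
  rw [div_le_div_iff₀ h2 h1]
  have hr : 1 ≤ E₂ / E₁ := (one_le_div h1).2 h12
  have hu0 : 0 ≤ x ^ E₁ := Real.rpow_nonneg hx0 _
  have hb : 1 + (E₂/E₁) * (x ^ E₁ - 1) ≤ (x ^ E₁) ^ (E₂/E₁) := by
    have := one_add_mul_self_le_rpow_one_add (s := x ^ E₁ - 1) (by linarith) hr
    simpa using this
  have hxe : (x ^ E₁) ^ (E₂/E₁) = x ^ E₂ := by
    rw [← Real.rpow_mul hx0]
    congr 1
    field_simp
  rw [hxe] at hb
  have hc : E₂/E₁*E₁ = E₂ := div_mul_cancel₀ _ h1.ne'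
  nlinarith [hb]

private lemma sum_range_eq (a : ℕ → ℝ) (k : ℕ) :
    ∑ j ∈ Finset.range (k+1), a j = a 0 + ∑ j ∈ Finset.Icc 1 k, a j := by
  induction k with
  | zero => simp
  | succ k ih => rw [Finset.sum_range_succ, ih, Finset.sum_Icc_succ_top (by omega)]; ring

/-- Let `Λ` be a finite, non-zero measure on `[0,1]` with
`μ := ∫_{[0,1]} log(1/(1-p)) p⁻² Λ(dp) < ∞`, let
`f y := ∫_{[0,1]} (1 - (1-p)^(e^y)) e^{-y} p⁻² Λ(dp)`, choose `κ ≥ 0` with `f ≤ μ/2` on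
`[κ,∞)`, and set `b_n := ∫_κ^{log n} dy/(μ - f y)`.  Then for every `k ≥ 1`, as `n → ∞`,
`b_n = log n/μ + Σ_{j=1}^k μ^{-(j+1)} ∫_0^{log n} f(y)^j dy + O(∫_0^{log n} f(y)^{k+1} dy) + O(1)`. -/
theorem bn_higher_expansion
    (Λ : Measure ℝ) [IsFiniteMeasure Λ] (hΛ : Λ ≠ 0) (hsupp : Λ (Icc (0 : ℝ) 1)ᶜ = 0)
    (hμfin : (∫⁻ p in Icc (0 : ℝ) 1,
      (if p = 0 ∨ p = 1 then ⊤ else ENNReal.ofReal (Real.log (1 / (1 - p)) / p ^ 2)) ∂Λ) ≠ ⊤)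
    (μ : ℝ) (hμ : μ = ∫ p in Icc (0 : ℝ) 1, Real.log (1 / (1 - p)) / p ^ 2 ∂Λ)
    (f : ℝ → ℝ)
    (hf : ∀ y : ℝ,
      f y = ∫ p in Icc (0 : ℝ) 1, (1 - (1 - p) ^ Real.exp y) / Real.exp y / p ^ 2 ∂Λ)
    (κ : ℝ) (hκ0 : 0 ≤ κ) (hκ : ∀ y ≥ κ, f y ≤ μ / 2)
    (b : ℕ → ℝ) (hb : ∀ n : ℕ, b n = ∫ y in κ..Real.log n, 1 / (μ - f y))
    (k : ℕ) (hk : 1 ≤ k) :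
    ∃ g h : ℕ → ℝ,
      (∀ n : ℕ,
        b n = Real.log n / μ +
            (∑ j ∈ Finset.Icc 1 k, (1 / μ ^ (j + 1)) * ∫ y in (0 : ℝ)..Real.log n, f y ^ j) +
            g n + h n) ∧
      g =O[atTop] (fun n : ℕ => ∫ y in (0 : ℝ)..Real.log n, f y ^ (k + 1)) ∧
      h =O[atTop] (fun _ : ℕ => (1 : ℝ)) := by
  have hSm : MeasurableSet (Icc (0:ℝ) 1) := measurableSet_Icc
  -- singletons 0, 1 are null
  have hsing : ∀ a : ℝ, (a = 0 ∨ a = 1) → Λ {a} = 0 := by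
    intro a ha
    by_contra hne
    apply hμfin
    refine eq_top_iff.2 ?_
    have hsub : ({a} : Set ℝ) ⊆ Icc (0:ℝ) 1 := by
      rcases ha with rfl | rfl <;> simp [Set.singleton_subset_iff]
    refine le_trans ?_ (lintegral_mono_set hsub)
    rw [lintegral_singleton]
    rw [if_pos ha, ENNReal.top_mul hne]
  have h0 : Λ {(0:ℝ)} = 0 := hsing 0 (Or.inl rfl)
  have h1 : Λ {(1:ℝ)} = 0 := hsing 1 (Or.inr rfl)
  have hIooc : Λ (Ioo (0:ℝ) 1)ᶜ = 0 := by
    have hsub : (Ioo (0:ℝ) 1)ᶜ ⊆ (Icc (0:ℝ) 1)ᶜ ∪ ({0} ∪ {1}) := by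
      intro x hx
      by_cases hxS : x ∈ Icc (0:ℝ) 1
      · right
        simp only [Set.mem_compl_iff, Set.mem_Ioo, not_and_or, not_lt] at hx
        rcases hx with hle | hle
        · left; simp [le_antisymm hle hxS.1]
        · right; simp [le_antisymm hxS.2 hle]
      · exact Or.inl hxS
    exact measure_mono_null hsub (measure_union_null hsupp (measure_union_null h0 h1))
  have haeIoo : ∀ᵐ p ∂Λ, p ∈ Ioo (0:ℝ) 1 := by
    rw [MeasureTheory.ae_iff]
    exact hIooc
  have haeIoo' : ∀ᵐ p ∂(Λ.restrict (Icc (0:ℝ) 1)), p ∈ Ioo (0:ℝ) 1 := ae_restrict_of_ae haeIoo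
  -- the dominating function H
  have hHnn : ∀ p ∈ Icc (0:ℝ) 1, 0 ≤ Real.log (1 / (1 - p)) / p ^ 2 := by
    intro p hp
    apply div_nonneg _ (sq_nonneg p)
    rcases eq_or_lt_of_le hp.2 with hEq | hlt
    · simp [← hEq]
    · apply Real.log_nonneg
      rw [le_div_iff₀ (by linarith)]
      linarith [hp.1]
  have hHmeas : Measurable fun p : ℝ => Real.log (1 / (1 - p)) / p ^ 2 :=
    (Real.measurable_log.comp (measurable_const.div (measurable_const.sub measurable_id))).div
      (measurable_id.pow_const 2)
  have hHint : IntegrableOn (fun p => Real.log (1 / (1 - p)) / p ^ 2) (Icc (0:ℝ) 1) Λ := by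
    refine ⟨hHmeas.aestronglyMeasurable, ?_⟩
    rw [hasFiniteIntegral_iff_norm]
    refine lt_of_le_of_lt (lintegral_mono_ae (haeIoo'.mono fun p hp => ?_)) hμfin.lt_top
    have hp0 : ¬(p = 0 ∨ p = 1) := by
      push_neg; exact ⟨ne_of_gt hp.1, ne_of_lt hp.2⟩
    rw [if_neg hp0, Real.norm_eq_abs, abs_of_nonneg (hHnn p ⟨hp.1.le, hp.2.le⟩)]
  -- μ is positive
  have hμpos : 0 < μ := by
    have h0le : (0 : ℝ → ℝ) ≤ᶠ[ae (Λ.restrict (Icc (0:ℝ) 1))]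
        fun p => Real.log (1 / (1 - p)) / p ^ 2 :=
      (ae_restrict_iff' hSm).2 (Filter.Eventually.of_forall hHnn)
    rw [hμ, integral_pos_iff_support_of_nonneg_ae h0le hHint]
    have hIoone : Λ (Ioo (0:ℝ) 1) ≠ 0 := by
      intro hz
      apply hΛ
      refine Measure.measure_univ_eq_zero.1 ?_
      rw [← Set.union_compl_self (Ioo (0:ℝ) 1)]
      exact measure_union_null hz hIooc
    have hres : (0 : ENNReal) < Λ.restrict (Icc (0:ℝ) 1) (Ioo 0 1) := by
      rw [Measure.restrict_apply measurableSet_Ioo,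
        Set.inter_eq_self_of_subset_left Set.Ioo_subset_Icc_self]
      exact pos_iff_ne_zero.2 hIoone
    refine lt_of_lt_of_le hres (measure_mono fun p hp => ?_)
    simp only [Function.mem_support]
    have hpos : 0 < Real.log (1 / (1 - p)) / p ^ 2 := by
      apply div_pos _ (pow_pos hp.1 2)
      apply Real.log_pos
      rw [one_lt_div (by linarith [hp.2])]
      linarith [hp.1]
    exact ne_of_gt hpos
  have hμne : μ ≠ 0 := hμpos.ne'
  -- properties of f
  have hGmeas : ∀ y : ℝ,
      Measurable fun p : ℝ => (1 - (1 - p) ^ Real.exp y) / Real.exp y / p ^ 2 := by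
    intro y; fun_prop
  have hGnn : ∀ y : ℝ, ∀ p ∈ Icc (0:ℝ) 1,
      0 ≤ (1 - (1 - p) ^ Real.exp y) / Real.exp y / p ^ 2 := by
    intro y p hp
    apply div_nonneg (div_nonneg _ (Real.exp_pos y).le) (sq_nonneg p)
    have hle1 : (1 - p) ^ Real.exp y ≤ 1 :=
      Real.rpow_le_one (by linarith [hp.2]) (by linarith [hp.1]) (Real.exp_pos y).le
    linarith
  have hGle : ∀ y : ℝ, ∀ p ∈ Ioo (0:ℝ) 1,
      (1 - (1 - p) ^ Real.exp y) / Real.exp y / p ^ 2 ≤ Real.log (1 / (1 - p)) / p ^ 2 := by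
    intro y p hp
    refine div_le_div_of_nonneg_right ?_ (sq_nonneg p)
    rw [div_le_iff₀ (Real.exp_pos y), mul_comm]
    exact aux_le_log (by linarith [hp.2]) (Real.exp_pos y)
  have hGint : ∀ y : ℝ,
      IntegrableOn (fun p => (1 - (1 - p) ^ Real.exp y) / Real.exp y / p ^ 2)
        (Icc (0:ℝ) 1) Λ := by
    intro y
    refine MeasureTheory.Integrable.mono hHint (hGmeas y).aestronglyMeasurable ?_
    filter_upwards [haeIoo'] with p hp
    have hpI : p ∈ Icc (0:ℝ) 1 := ⟨hp.1.le, hp.2.le⟩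
    rw [Real.norm_eq_abs, Real.norm_eq_abs, abs_of_nonneg (hGnn y p hpI),
      abs_of_nonneg (hHnn p hpI)]
    exact hGle y p hp
  have hfnn : ∀ y, 0 ≤ f y := by
    intro y
    rw [hf y]
    exact setIntegral_nonneg hSm (hGnn y)
  have hfle : ∀ y, f y ≤ μ := by
    intro y
    rw [hf y, hμ]
    refine integral_mono_ae (hGint y) hHint ?_
    filter_upwards [haeIoo'] with p hp using hGle y p hp
  have hfanti : Antitone f := by
    intro y1 y2 h12
    rw [hf y1, hf y2]
    refine setIntegral_mono_on (hGint y2) (hGint y1) hSm fun p hp => ?_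
    refine div_le_div_of_nonneg_right ?_ (sq_nonneg p)
    exact aux_anti (by linarith [hp.2]) (by linarith [hp.1]) (Real.exp_pos y1)
      (Real.exp_le_exp.2 h12)
  have hfmeas : Measurable f := hfanti.measurable
  -- interval integrability of powers of f
  have hIIpow : ∀ (j : ℕ) (a c : ℝ), IntervalIntegrable (fun y => f y ^ j) volume a c := by
    intro j a c
    rw [intervalIntegrable_iff]
    refine Measure.integrableOn_of_bounded (M := μ ^ j)
      (by rw [Set.uIoc]; exact measure_Ioc_lt_top.ne)
      (hfmeas.pow_const j).aestronglyMeasurable ?_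
    refine ae_of_all _ fun y => ?_
    rw [Real.norm_eq_abs, abs_of_nonneg (pow_nonneg (hfnn y) j)]
    exact pow_le_pow_left₀ (hfnn y) (hfle y) j
  -- the error integrand
  set e : ℝ → ℝ := fun y => f y ^ (k+1) / (μ ^ (k+1) * (μ - f y)) with he
  have hemeas : Measurable e :=
    (hfmeas.pow_const _).div (measurable_const.mul (measurable_const.sub hfmeas))
  have hμk1 : (0:ℝ) < μ ^ (k+1) := pow_pos hμpos _
  have hdenom : ∀ y, κ ≤ y → μ ^ (k+2) / 2 ≤ μ ^ (k+1) * (μ - f y) := by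
    intro y hy
    have hfy : f y ≤ μ / 2 := hκ y hy
    have : μ ^ (k+1) * (μ / 2) ≤ μ ^ (k+1) * (μ - f y) := by
      apply mul_le_mul_of_nonneg_left (by linarith) hμk1.le
    calc μ ^ (k+2) / 2 = μ ^ (k+1) * (μ / 2) := by ring
      _ ≤ _ := this
  have hμk2 : (0:ℝ) < μ ^ (k+2) := pow_pos hμpos _
  have henn : ∀ y, κ ≤ y → 0 ≤ e y := by
    intro y hy
    apply div_nonneg (pow_nonneg (hfnn y) _)
    have := hdenom y hy
    nlinarith
  have hele : ∀ y, κ ≤ y → e y ≤ 2 / μ ^ (k+2) * f y ^ (k+1) := by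
    intro y hy
    have hd := hdenom y hy
    calc e y ≤ f y ^ (k+1) / (μ ^ (k+2) / 2) := by
          apply div_le_div_of_nonneg_left (pow_nonneg (hfnn y) _) (by positivity) hd
      _ = 2 / μ ^ (k+2) * f y ^ (k+1) := by field_simp
  have hIIe : ∀ L, κ ≤ L → IntervalIntegrable e volume κ L := by
    intro L hL
    rw [intervalIntegrable_iff]
    refine Measure.integrableOn_of_bounded (M := 2 / μ ^ (k+2) * μ ^ (k+1))
      (by rw [Set.uIoc]; exact measure_Ioc_lt_top.ne) hemeas.aestronglyMeasurable ?_
    refine (ae_restrict_iff' measurableSet_uIoc).2 (ae_of_all _ fun y hy => ?_)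
    rw [Set.uIoc_of_le hL] at hy
    have hyκ : κ ≤ y := hy.1.le
    rw [Real.norm_eq_abs, abs_of_nonneg (henn y hyκ)]
    refine le_trans (hele y hyκ) ?_
    have : f y ^ (k+1) ≤ μ ^ (k+1) := pow_le_pow_left₀ (hfnn y) (hfle y) _
    apply mul_le_mul_of_nonneg_left this (by positivity)
  -- the key decomposition of b for κ ≤ L
  have key : ∀ L, κ ≤ L →
      (∫ y in κ..L, 1/(μ - f y)) =
        (∑ j ∈ Finset.range (k+1), (∫ y in κ..L, f y ^ j) / μ ^ (j+1)) + ∫ y in κ..L, e y := by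
    intro L hL
    have hcong : ∀ y ∈ Set.uIcc κ L,
        1/(μ - f y) = (∑ j ∈ Finset.range (k+1), f y ^ j / μ ^ (j+1)) + e y := by
      intro y hy
      rw [Set.uIcc_of_le hL] at hy
      have hfy : f y ≤ μ / 2 := hκ y hy.1
      exact geom_aux (f y) μ hμne (by intro hzero; nlinarith) k
    rw [intervalIntegral.integral_congr hcong]
    have hIIsum : IntervalIntegrable
        (fun y => ∑ j ∈ Finset.range (k+1), f y ^ j / μ ^ (j+1)) volume κ L := by
      have := IntervalIntegrable.sum (μ := volume) (a := κ) (b := L)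
        (Finset.range (k+1)) (f := fun j y => f y ^ j / μ ^ (j+1))
        (fun j _ => (hIIpow j κ L).div_const _)
      rw [Finset.sum_fn] at this
      exact this
    rw [intervalIntegral.integral_add hIIsum (hIIe L hL)]
    congr 1
    rw [intervalIntegral.integral_finset_sum (fun j _ => (hIIpow j κ L).div_const _)]
    exact Finset.sum_congr rfl fun j _ => intervalIntegral.integral_div _ _
  -- assemble
  set C : ℝ := κ/μ + ∑ j ∈ Finset.Icc 1 k, (1 / μ ^ (j + 1)) * ∫ y in (0:ℝ)..κ, f y ^ j with hC
  refine ⟨fun n => b n - Real.log n / μ -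
      (∑ j ∈ Finset.Icc 1 k, (1 / μ ^ (j + 1)) * ∫ y in (0:ℝ)..Real.log n, f y ^ j) + C,
    fun _ => -C, fun n => by ring, ?_, ?_⟩
  · -- BigO part for g
    rw [Asymptotics.isBigO_iff]
    refine ⟨2 / μ ^ (k+2), ?_⟩
    have hev : ∀ᶠ n : ℕ in atTop, κ ≤ Real.log n := by
      filter_upwards [eventually_ge_atTop (max 1 ⌈Real.exp κ⌉₊)] with n hn
      have hn1 : 1 ≤ n := le_trans (le_max_left _ _) hn
      have hnE : Real.exp κ ≤ n := by
        refine le_trans (Nat.le_ceil _) ?_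
        exact_mod_cast le_trans (le_max_right _ _) hn
      have hn0 : (0:ℝ) < n := by exact_mod_cast hn1
      rw [Real.le_log_iff_exp_le hn0]
      exact hnE
    filter_upwards [hev] with n hL
    set L : ℝ := Real.log n with hLdef
    -- identify g n with the error integral
    have hEq : b n - L / μ -
        (∑ j ∈ Finset.Icc 1 k, (1 / μ ^ (j + 1)) * ∫ y in (0:ℝ)..L, f y ^ j) + C
        = ∫ y in κ..L, e y := by
      rw [hb n, key L hL, sum_range_eq (fun j => (∫ y in κ..L, f y ^ j) / μ ^ (j+1)) k]
      have ha0 : (∫ y in κ..L, f y ^ 0) / μ ^ (0+1) = (L - κ)/μ := by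
        simp
      have hsplit : (∑ j ∈ Finset.Icc 1 k, (∫ y in κ..L, f y ^ j) / μ ^ (j+1)) =
          (∑ j ∈ Finset.Icc 1 k, (1 / μ ^ (j + 1)) * ∫ y in (0:ℝ)..L, f y ^ j) -
          (∑ j ∈ Finset.Icc 1 k, (1 / μ ^ (j + 1)) * ∫ y in (0:ℝ)..κ, f y ^ j) := by
        rw [← Finset.sum_sub_distrib]
        refine Finset.sum_congr rfl fun j _ => ?_
        rw [← intervalIntegral.integral_add_adjacent_intervals (hIIpow j 0 κ) (hIIpow j κ L)]
        field_simp
        ring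
      rw [ha0, hsplit, hC]
      ring
    rw [hEq]
    -- bounds
    have hE_nn : 0 ≤ ∫ y in κ..L, e y :=
      intervalIntegral.integral_nonneg hL fun y hy => henn y hy.1
    have hInn : 0 ≤ ∫ y in (0:ℝ)..L, f y ^ (k+1) :=
      intervalIntegral.integral_nonneg (le_trans hκ0 hL)
        (fun y _ => pow_nonneg (hfnn y) _)
    have hEle : (∫ y in κ..L, e y) ≤ 2 / μ ^ (k+2) * ∫ y in (0:ℝ)..L, f y ^ (k+1) := by
      have step1 : (∫ y in κ..L, e y) ≤ ∫ y in κ..L, 2 / μ ^ (k+2) * f y ^ (k+1) := by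
        refine intervalIntegral.integral_mono_on hL (hIIe L hL)
          ((hIIpow (k+1) κ L).const_mul _) fun y hy => hele y hy.1
      have step2 : (∫ y in κ..L, 2 / μ ^ (k+2) * f y ^ (k+1)) =
          2 / μ ^ (k+2) * ∫ y in κ..L, f y ^ (k+1) := intervalIntegral.integral_const_mul _ _
      have hadj := intervalIntegral.integral_add_adjacent_intervals
        (hIIpow (k+1) 0 κ) (hIIpow (k+1) κ L)
      have h0κ : 0 ≤ ∫ y in (0:ℝ)..κ, f y ^ (k+1) :=
        intervalIntegral.integral_nonneg hκ0 (fun y _ => pow_nonneg (hfnn y) _)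
      have hcnn : (0:ℝ) ≤ 2 / μ ^ (k+2) := by positivity
      have step3 : (∫ y in κ..L, f y ^ (k+1)) ≤ ∫ y in (0:ℝ)..L, f y ^ (k+1) := by
        rw [← hadj]; linarith
      calc (∫ y in κ..L, e y) ≤ 2 / μ ^ (k+2) * ∫ y in κ..L, f y ^ (k+1) := by
            rw [← step2]; exact step1
        _ ≤ 2 / μ ^ (k+2) * ∫ y in (0:ℝ)..L, f y ^ (k+1) :=
            mul_le_mul_of_nonneg_left step3 hcnn
    rw [Real.norm_eq_abs, abs_of_nonneg hE_nn, Real.norm_eq_abs, abs_of_nonneg hInn]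
    exact hEle
  · -- h is O(1)
    exact (isBigO_const_const (-C) one_ne_zero atTop)
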